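/- Let ρ₁, ρ₂, ρ₃ be density matrices on ℂ² and let B₁, B₂ be 2×2 complex Hermitian matrices with −I ⪯ B_j ⪯ I. Then the dimension witness I₃ = Tr(ρ₁B₁) + Tr(ρ₁B₂) + Tr(ρ₂B₁) − Tr(ρ₂B₂) − Tr(ρ₃B₁) satisfies I₃ ≤ 1 + 2√2. Moreover this bound is attained: there exist qubit density matrices ρ₁, ρ₂, ρ₃ and Hermitian involutions B₁, B₂ on ℂ² for which I₃ = 1 + 2√2. -/

import Mathlib

set_option maxHeartbeats 1000000

open Matrix
open scoped ComplexOrder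

private lemma psd_diag_nonneg {M : Matrix (Fin 2) (Fin 2) ℂ} (h : M.PosSemidef)
    (i : Fin 2) : 0 ≤ M i i := by
  have := h.dotProduct_mulVec_nonneg (Pi.single i 1)
  simpa [dotProduct, mulVec, Pi.single_apply, Finset.sum_ite_eq] using this

private lemma psd_det_nonneg {M : Matrix (Fin 2) (Fin 2) ℂ} (h : M.PosSemidef) :
    0 ≤ M.det := by
  rw [h.1.det_eq_prod_eigenvalues]
  have h2 := h.eigenvalues_nonneg
  have h3 : (0:ℝ) ≤ ∏ i : Fin 2, h.1.eigenvalues i := Finset.prod_nonneg fun i _ => h2 i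
  have h4 : (0:ℂ) ≤ ((∏ i : Fin 2, h.1.eigenvalues i : ℝ) : ℂ) := Complex.zero_le_real.mpr h3
  have h5 : ((∏ i : Fin 2, h.1.eigenvalues i : ℝ) : ℂ)
      = ∏ i : Fin 2, ((h.1.eigenvalues i : ℝ) : ℂ) := by push_cast; rfl
  rw [h5] at h4
  exact h4

/-- basic facts for a 2×2 PSD complex matrix -/
private lemma herm_psd_facts {M : Matrix (Fin 2) (Fin 2) ℂ} (h : M.PosSemidef) :
    0 ≤ (M 0 0).re ∧ 0 ≤ (M 1 1).re ∧ (M 0 0).im = 0 ∧ (M 1 1).im = 0 ∧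
    M 1 0 = starRingEnd ℂ (M 0 1) ∧
    Complex.normSq (M 0 1) ≤ (M 0 0).re * (M 1 1).re := by
  have h00 := psd_diag_nonneg h 0
  have h11 := psd_diag_nonneg h 1
  rw [Complex.le_def] at h00 h11
  have hherm : M 1 0 = starRingEnd ℂ (M 0 1) := (h.1.apply 1 0).symm
  have hdet := psd_det_nonneg h
  rw [Matrix.det_fin_two, Complex.le_def] at hdet
  refine ⟨h00.1, h11.1, h00.2.symm, h11.2.symm, hherm, ?_⟩
  obtain ⟨hre, him⟩ := hdet
  rw [hherm] at hre
  simp only [Complex.sub_re, Complex.mul_re, Complex.conj_re, Complex.conj_im,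
    Complex.zero_re, Complex.normSq_apply] at hre ⊢
  have h1 : (M 0 0).im = 0 := h00.2.symm
  have h2 : (M 1 1).im = 0 := h11.2.symm
  nlinarith [hre]

private lemma sqrt_add_sqrt_le {α β : ℝ} (ha : 0 ≤ α) (hb : 0 ≤ β) :
    Real.sqrt α + Real.sqrt β ≤ Real.sqrt (2*(α+β)) := by
  rw [show Real.sqrt α + Real.sqrt β = Real.sqrt ((Real.sqrt α + Real.sqrt β)^2) by
    rw [Real.sqrt_sq (by positivity)]]
  apply Real.sqrt_le_sqrt
  have h1 : Real.sqrt α ^ 2 = α := Real.sq_sqrt ha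
  have h2 : Real.sqrt β ^ 2 = β := Real.sq_sqrt hb
  nlinarith [sq_nonneg (Real.sqrt α - Real.sqrt β)]

/-- Key lemma: `Re Tr(ρ A) ≤ λmax(A)` for 2×2. -/
private lemma trace_mul_le (ρ A : Matrix (Fin 2) (Fin 2) ℂ) (hρ : ρ.PosSemidef)
    (ht : ρ.trace = 1) (hA : A.IsHermitian) :
    ((ρ * A).trace).re ≤ ((A 0 0).re + (A 1 1).re)/2
      + Real.sqrt ((((A 0 0).re - (A 1 1).re)/2)^2 + Complex.normSq (A 0 1)) := by
  obtain ⟨hp, hq, hρ0, hρ1, hρh, hρdet⟩ := herm_psd_facts hρ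
  have hA0 : (A 0 0).im = 0 := by
    have h' : -(A 0 0).im = (A 0 0).im := by
      simpa [Complex.ext_iff] using congrArg Complex.im (hA.apply 0 0)
    linarith
  have hA1 : (A 1 1).im = 0 := by
    have h' : -(A 1 1).im = (A 1 1).im := by
      simpa [Complex.ext_iff] using congrArg Complex.im (hA.apply 1 1)
    linarith
  have hAh : A 1 0 = starRingEnd ℂ (A 0 1) := (hA.apply 1 0).symm
  set p := (ρ 0 0).re with hpdef
  set q := (ρ 1 1).re with hqdef
  set a := (A 0 0).re with hadef
  set d := (A 1 1).re with hddef
  have htr : p + q = 1 := by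
    have := congrArg Complex.re ht
    simpa [Matrix.trace_fin_two, Complex.add_re] using this
  -- trace expansion
  have hte : ((ρ * A).trace).re
      = p*a + q*d + 2*((ρ 0 1).re*(A 0 1).re + (ρ 0 1).im*(A 0 1).im) := by
    rw [Matrix.trace_fin_two]
    simp only [Matrix.mul_apply, Fin.sum_univ_two, Complex.add_re, Complex.mul_re,
      hρh, hAh, Complex.conj_re, Complex.conj_im]
    rw [hρ0, hρ1, hA0, hA1]
    ring
  rw [hte]
  set w := Real.sqrt (Complex.normSq (A 0 1)) with hwdef
  set P := Real.sqrt (p*q) with hPdef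
  have hw0 : 0 ≤ w := Real.sqrt_nonneg _
  have hP0 : 0 ≤ P := Real.sqrt_nonneg _
  have hw2 : w^2 = Complex.normSq (A 0 1) := Real.sq_sqrt (Complex.normSq_nonneg _)
  have hP2 : P^2 = p*q := Real.sq_sqrt (mul_nonneg hp hq)
  have hnsA : (A 0 1).re^2 + (A 0 1).im^2 = w^2 := by
    rw [hw2, Complex.normSq_apply]; ring
  have hnsρ : (ρ 0 1).re^2 + (ρ 0 1).im^2 ≤ p*q := by
    have := hρdet
    rw [Complex.normSq_apply] at this
    nlinarith [this]
  have hzw : (ρ 0 1).re*(A 0 1).re + (ρ 0 1).im*(A 0 1).im ≤ P * w := by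
    nlinarith [sq_nonneg ((ρ 0 1).re*(A 0 1).im - (ρ 0 1).im*(A 0 1).re),
      mul_nonneg hP0 hw0, hnsA, hnsρ, hP2,
      sq_nonneg (P*w - ((ρ 0 1).re*(A 0 1).re + (ρ 0 1).im*(A 0 1).im)),
      sq_nonneg (P*w + ((ρ 0 1).re*(A 0 1).re + (ρ 0 1).im*(A 0 1).im))]
  set X := (a - d)/2 with hXdef
  set S := Real.sqrt (X^2 + Complex.normSq (A 0 1)) with hSdef
  have hS0 : 0 ≤ S := Real.sqrt_nonneg _
  have hS : S^2 = X^2 + w^2 := by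
    rw [hSdef, Real.sq_sqrt (add_nonneg (sq_nonneg X) (Complex.normSq_nonneg _)), hw2]
  have hE : S^2 - ((p-q)*X + 2*P*w)^2 = (2*P*X - (p-q)*w)^2 := by
    linear_combination hS - 4*(X^2+w^2)*hP2 - (X^2+w^2)*(p+q+1)*htr
  have hES : (p-q)*X + 2*P*w ≤ S := by
    nlinarith [hE, sq_nonneg (2*P*X - (p-q)*w), hS0,
      sq_nonneg (S - ((p-q)*X + 2*P*w)), sq_nonneg (S + ((p-q)*X + 2*P*w))]
  have hlin : p*a + q*d = (a+d)/2 + (p-q)*X := by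
    rw [hXdef]; linear_combination ((a+d)/2)*htr - ((a-d)/2)*htr + ((a-d)/2)*htr
  nlinarith [hzw, hES, hlin]

/-- the purely real combination bound -/
private lemma real_bound (a1 d1 a2 d2 r1 r2 s t : ℝ)
    (hr1 : 0 ≤ r1) (hr2 : 0 ≤ r2) (hs : 0 ≤ s) (hts : 0 ≤ t)
    (hpar : s + t = 2*r1 + 2*r2)
    (h1m : r1 ≤ (1-a1)*(1-d1)) (h1p : r1 ≤ (1+a1)*(1+d1))
    (h2m : r2 ≤ (1-a2)*(1-d2)) (h2p : r2 ≤ (1+a2)*(1+d2))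
    (ha1 : a1 ≤ 1) (ha1' : -1 ≤ a1) (hd1 : d1 ≤ 1) (hd1' : -1 ≤ d1)
    (ha2 : a2 ≤ 1) (ha2' : -1 ≤ a2) (hd2 : d2 ≤ 1) (hd2' : -1 ≤ d2) :
    (a1+d1)/2 + Real.sqrt (((a1+a2-(d1+d2))/2)^2 + s)
      + Real.sqrt (((a1-a2-(d1-d2))/2)^2 + t)
      + Real.sqrt (((a1-d1)/2)^2 + r1) ≤ 1 + 2*Real.sqrt 2 := by
  set u := (a1-d1)/2 with hu
  set v := (a2-d2)/2 with hv
  set m := (a1+d1)/2 with hm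
  have hu1 : u^2 + r1 ≤ (1-m)^2 := by rw [hu, hm]; nlinarith [h1m]
  have hu1' : u^2 + r1 ≤ (1+m)^2 := by rw [hu, hm]; nlinarith [h1p]
  have hv1 : v^2 + r2 ≤ (1-a2/2-d2/2)^2 := by nlinarith [h2m]
  have hv1' : v^2 + r2 ≤ (1+a2/2+d2/2)^2 := by nlinarith [h2p]
  have hm1 : m^2 ≤ 1 := by rw [hm]; nlinarith
  have hm2 : (a2/2+d2/2)^2 ≤ 1 := by nlinarith
  have hsum1 : u^2 + r1 ≤ 1 := by
    have hmul := mul_le_mul hu1 hu1' (by positivity) (by positivity)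
    nlinarith [hmul, hm1, sq_nonneg u]
  have hsum2 : v^2 + r2 ≤ 1 := by
    have hmul := mul_le_mul hv1 hv1' (by positivity) (by positivity)
    nlinarith [hmul, hm2, sq_nonneg v]
  have hthird : Real.sqrt (u^2 + r1) ≤ 1 - m := by
    have h0 : (0:ℝ) ≤ 1 - m := by rw [hm]; linarith
    calc Real.sqrt (u^2 + r1) ≤ Real.sqrt ((1-m)^2) := Real.sqrt_le_sqrt hu1
      _ = 1 - m := by rw [Real.sqrt_sq h0]
  have hXp : (a1+a2-(d1+d2))/2 = u + v := by rw [hu, hv]; ring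
  have hXm : (a1-a2-(d1-d2))/2 = u - v := by rw [hu, hv]; ring
  have hmain : Real.sqrt ((u+v)^2 + s) + Real.sqrt ((u-v)^2 + t) ≤ 2*Real.sqrt 2 := by
    have h1 := sqrt_add_sqrt_le (by positivity : (0:ℝ) ≤ (u+v)^2 + s)
      (by positivity : (0:ℝ) ≤ (u-v)^2 + t)
    have h2 : 2*(((u+v)^2 + s) + ((u-v)^2 + t)) ≤ 8 := by nlinarith [hsum1, hsum2, hpar]
    have h3 : Real.sqrt (2*(((u+v)^2 + s) + ((u-v)^2 + t))) ≤ Real.sqrt 8 :=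
      Real.sqrt_le_sqrt h2
    have h4 : Real.sqrt 8 = 2*Real.sqrt 2 := by
      rw [show (8:ℝ) = 2^2*2 by norm_num, Real.sqrt_mul (by positivity),
        Real.sqrt_sq (by norm_num)]
    linarith
  rw [hXp, hXm]
  have : (a1+d1)/2 = m := hm.symm
  linarith [hmain, hthird]

/-- PSD certificate for a real symmetric 2×2 matrix -/
private lemma psd_real_entries (p q c : ℝ) (hp : 0 ≤ p) (hq : 0 ≤ q) (h : c^2 ≤ p*q) :
    (!![(p:ℂ), (c:ℂ); (c:ℂ), (q:ℂ)]).PosSemidef := by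
  rw [Matrix.posSemidef_iff_dotProduct_mulVec]
  constructor
  · ext i j
    fin_cases i <;> fin_cases j <;> simp [Matrix.conjTranspose_apply]
  · intro x
    have hexp : star x ⬝ᵥ (!![(p:ℂ), (c:ℂ); (c:ℂ), (q:ℂ)]).mulVec x
        = starRingEnd ℂ (x 0) * ((p:ℂ) * x 0 + (c:ℂ) * x 1)
          + starRingEnd ℂ (x 1) * ((c:ℂ) * x 0 + (q:ℂ) * x 1) := by
      simp [dotProduct, mulVec, Fin.sum_univ_two]
    rw [hexp, Complex.le_def]
    constructor
    · simp only [Complex.add_re, Complex.mul_re, Complex.add_im, Complex.mul_im,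
        Complex.conj_re, Complex.conj_im, Complex.ofReal_re, Complex.ofReal_im,
        Complex.zero_re]
      set e := (x 0).re; set f := (x 0).im; set g := (x 1).re; set h' := (x 1).im
      have hC : (e*g + f*h')^2 ≤ (e^2+f^2)*(g^2+h'^2) := by
        nlinarith [sq_nonneg (e*h' - f*g)]
      have hc2 : 0 ≤ p*q - c^2 := by linarith
      have hN : 0 ≤ p*(e^2+f^2) + q*(g^2+h'^2) := by positivity
      have key : (2*c*(e*g+f*h'))^2 ≤ (p*(e^2+f^2) + q*(g^2+h'^2))^2 := by
        nlinarith [sq_nonneg (p*(e^2+f^2) - q*(g^2+h'^2)),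
          mul_le_mul h hC (sq_nonneg (e*g+f*h')) (mul_nonneg hp hq),
          sq_nonneg (e*g+f*h'), mul_nonneg hp hq]
      nlinarith [key, hN]
    · simp only [Complex.add_im, Complex.add_re, Complex.mul_im, Complex.mul_re,
        Complex.conj_re, Complex.conj_im, Complex.ofReal_re, Complex.ofReal_im,
        Complex.zero_im]
      ring

theorem dimension_witness_qubit_bound :
    (∀ (ρ₁ ρ₂ ρ₃ B₁ B₂ : Matrix (Fin 2) (Fin 2) ℂ),
      ρ₁.PosSemidef → ρ₁.trace = 1 →
      ρ₂.PosSemidef → ρ₂.trace = 1 →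
      ρ₃.PosSemidef → ρ₃.trace = 1 →
      B₁.IsHermitian → (1 - B₁).PosSemidef → (1 + B₁).PosSemidef →
      B₂.IsHermitian → (1 - B₂).PosSemidef → (1 + B₂).PosSemidef →
      ((ρ₁ * B₁).trace + (ρ₁ * B₂).trace + (ρ₂ * B₁).trace
          - (ρ₂ * B₂).trace - (ρ₃ * B₁).trace).re ≤ 1 + 2 * Real.sqrt 2)
    ∧ (∃ ρ₁ ρ₂ ρ₃ B₁ B₂ : Matrix (Fin 2) (Fin 2) ℂ,
        ρ₁.PosSemidef ∧ ρ₁.trace = 1 ∧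
        ρ₂.PosSemidef ∧ ρ₂.trace = 1 ∧
        ρ₃.PosSemidef ∧ ρ₃.trace = 1 ∧
        B₁.IsHermitian ∧ B₁ * B₁ = 1 ∧
        B₂.IsHermitian ∧ B₂ * B₂ = 1 ∧
        ((ρ₁ * B₁).trace + (ρ₁ * B₂).trace + (ρ₂ * B₁).trace
            - (ρ₂ * B₂).trace - (ρ₃ * B₁).trace).re = 1 + 2 * Real.sqrt 2) := by
  constructor
  · intro ρ₁ ρ₂ ρ₃ B₁ B₂ hρ₁ ht₁ hρ₂ ht₂ hρ₃ ht₃ hB₁ hB₁m hB₁p hB₂ hB₂m hB₂p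
    have hSh : (B₁ + B₂).IsHermitian := hB₁.add hB₂
    have hDh : (B₁ - B₂).IsHermitian := hB₁.sub hB₂
    have hNh : (-B₁).IsHermitian := hB₁.neg
    have t1 := trace_mul_le ρ₁ (B₁ + B₂) hρ₁ ht₁ hSh
    have t2 := trace_mul_le ρ₂ (B₁ - B₂) hρ₂ ht₂ hDh
    have t3 := trace_mul_le ρ₃ (-B₁) hρ₃ ht₃ hNh
    have eS00 : ((B₁ + B₂) 0 0) = B₁ 0 0 + B₂ 0 0 := rfl
    have eS11 : ((B₁ + B₂) 1 1) = B₁ 1 1 + B₂ 1 1 := rfl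
    have eS01 : ((B₁ + B₂) 0 1) = B₁ 0 1 + B₂ 0 1 := rfl
    have eD00 : ((B₁ - B₂) 0 0) = B₁ 0 0 - B₂ 0 0 := rfl
    have eD11 : ((B₁ - B₂) 1 1) = B₁ 1 1 - B₂ 1 1 := rfl
    have eD01 : ((B₁ - B₂) 0 1) = B₁ 0 1 - B₂ 0 1 := rfl
    have eN00 : ((-B₁) 0 0) = -(B₁ 0 0) := rfl
    have eN11 : ((-B₁) 1 1) = -(B₁ 1 1) := rfl
    have eN01 : ((-B₁) 0 1) = -(B₁ 0 1) := rfl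
    rw [eS00, eS11, eS01, Complex.add_re, Complex.add_re] at t1
    rw [eD00, eD11, eD01, Complex.sub_re, Complex.sub_re] at t2
    rw [eN00, eN11, eN01, Complex.neg_re, Complex.neg_re, Complex.normSq_neg] at t3
    rw [show ((-(B₁ 0 0).re - -(B₁ 1 1).re)/2)^2 + Complex.normSq (B₁ 0 1)
        = (((B₁ 0 0).re - (B₁ 1 1).re)/2)^2 + Complex.normSq (B₁ 0 1) from by ring_nf] at t3
    -- constraints from the effects
    obtain ⟨y1, y2, -, -, -, y3⟩ := herm_psd_facts hB₁m
    obtain ⟨z1, z2, -, -, -, z3⟩ := herm_psd_facts hB₁p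
    obtain ⟨w1, w2, -, -, -, w3⟩ := herm_psd_facts hB₂m
    obtain ⟨v1, v2, -, -, -, v3⟩ := herm_psd_facts hB₂p
    have f00 : ∀ C : Matrix (Fin 2) (Fin 2) ℂ, (1 - C) 0 0 = 1 - C 0 0 := by
      intro C; simp [Matrix.sub_apply, Matrix.one_apply]
    have f11 : ∀ C : Matrix (Fin 2) (Fin 2) ℂ, (1 - C) 1 1 = 1 - C 1 1 := by
      intro C; simp [Matrix.sub_apply, Matrix.one_apply]
    have f01 : ∀ C : Matrix (Fin 2) (Fin 2) ℂ, (1 - C) 0 1 = -(C 0 1) := by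
      intro C; simp [Matrix.sub_apply, Matrix.one_apply]
    have g00 : ∀ C : Matrix (Fin 2) (Fin 2) ℂ, (1 + C) 0 0 = 1 + C 0 0 := by
      intro C; simp [Matrix.add_apply, Matrix.one_apply]
    have g11 : ∀ C : Matrix (Fin 2) (Fin 2) ℂ, (1 + C) 1 1 = 1 + C 1 1 := by
      intro C; simp [Matrix.add_apply, Matrix.one_apply]
    have g01 : ∀ C : Matrix (Fin 2) (Fin 2) ℂ, (1 + C) 0 1 = C 0 1 := by
      intro C; simp [Matrix.add_apply, Matrix.one_apply]
    rw [f00 B₁] at y1; rw [f11 B₁] at y2; rw [f00 B₁, f11 B₁, f01 B₁] at y3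
    rw [g00 B₁] at z1; rw [g11 B₁] at z2; rw [g00 B₁, g11 B₁, g01 B₁] at z3
    rw [f00 B₂] at w1; rw [f11 B₂] at w2; rw [f00 B₂, f11 B₂, f01 B₂] at w3
    rw [g00 B₂] at v1; rw [g11 B₂] at v2; rw [g00 B₂, g11 B₂, g01 B₂] at v3
    simp only [Complex.sub_re, Complex.add_re, Complex.one_re, Complex.normSq_neg]
      at y1 y2 y3 z1 z2 z3 w1 w2 w3 v1 v2 v3
    have hpar : Complex.normSq (B₁ 0 1 + B₂ 0 1) + Complex.normSq (B₁ 0 1 - B₂ 0 1)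
        = 2*Complex.normSq (B₁ 0 1) + 2*Complex.normSq (B₂ 0 1) := by
      simp only [Complex.normSq_apply, Complex.add_re, Complex.add_im,
        Complex.sub_re, Complex.sub_im]
      ring
    have RB := real_bound (B₁ 0 0).re (B₁ 1 1).re (B₂ 0 0).re (B₂ 1 1).re
      (Complex.normSq (B₁ 0 1)) (Complex.normSq (B₂ 0 1))
      (Complex.normSq (B₁ 0 1 + B₂ 0 1)) (Complex.normSq (B₁ 0 1 - B₂ 0 1))
      (Complex.normSq_nonneg _) (Complex.normSq_nonneg _)
      (Complex.normSq_nonneg _) (Complex.normSq_nonneg _)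
      hpar y3 z3 w3 v3
      (by linarith) (by linarith) (by linarith) (by linarith)
      (by linarith) (by linarith) (by linarith) (by linarith)
    have goalEq : ((ρ₁ * B₁).trace + (ρ₁ * B₂).trace + (ρ₂ * B₁).trace
          - (ρ₂ * B₂).trace - (ρ₃ * B₁).trace).re
        = ((ρ₁ * (B₁ + B₂)).trace).re + ((ρ₂ * (B₁ - B₂)).trace).re
          + ((ρ₃ * (-B₁)).trace).re := by
      rw [mul_add, mul_sub, mul_neg, Matrix.trace_add, Matrix.trace_sub,
        Matrix.trace_neg]
      simp only [Complex.add_re, Complex.sub_re, Complex.neg_re]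
      ring
    rw [goalEq]
    linarith [t1, t2, t3, RB]
  · have h2 : (0:ℝ) ≤ 2 := by norm_num
    have hc2 : (Real.sqrt 2/4)^2 = 1/8 := by
      rw [div_pow, Real.sq_sqrt h2]; norm_num
    have hs2 : Real.sqrt 2 ≤ 2 := by
      nlinarith [Real.sq_sqrt h2, Real.sqrt_nonneg 2]
    have hc0 : (0:ℝ) ≤ Real.sqrt 2/4 := by positivity
    refine ⟨!![((1/2 + Real.sqrt 2/4 : ℝ):ℂ), ((Real.sqrt 2/4 : ℝ):ℂ);
               ((Real.sqrt 2/4 : ℝ):ℂ), ((1/2 - Real.sqrt 2/4 : ℝ):ℂ)],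
            !![((1/2 + Real.sqrt 2/4 : ℝ):ℂ), ((-(Real.sqrt 2/4) : ℝ):ℂ);
               ((-(Real.sqrt 2/4) : ℝ):ℂ), ((1/2 - Real.sqrt 2/4 : ℝ):ℂ)],
            !![((0:ℝ):ℂ), ((0:ℝ):ℂ); ((0:ℝ):ℂ), ((1:ℝ):ℂ)],
            !![(1:ℂ), 0; 0, -1], !![(0:ℂ), 1; 1, 0],
            ?_, ?_, ?_, ?_, ?_, ?_, ?_, ?_, ?_, ?_, ?_⟩
    · exact psd_real_entries _ _ _ (by linarith) (by linarith) (by nlinarith [hc2])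
    · simp [Matrix.trace_fin_two]
      push_cast
      ring
    · exact psd_real_entries _ _ _ (by linarith) (by linarith) (by nlinarith [hc2])
    · simp [Matrix.trace_fin_two]
      push_cast
      ring
    · exact psd_real_entries _ _ _ (by norm_num) (by norm_num) (by norm_num)
    · simp [Matrix.trace_fin_two]
    · ext i j
      fin_cases i <;> fin_cases j <;> simp [Matrix.conjTranspose_apply]
    · ext i j
      fin_cases i <;> fin_cases j <;>
        simp [Matrix.mul_apply, Fin.sum_univ_two, Matrix.one_apply]
    · ext i j
      fin_cases i <;> fin_cases j <;> simp [Matrix.conjTranspose_apply]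
    · ext i j
      fin_cases i <;> fin_cases j <;>
        simp [Matrix.mul_apply, Fin.sum_univ_two, Matrix.one_apply]
    · rw [show (1:ℝ) + 2*Real.sqrt 2 = 8*(Real.sqrt 2/4) + 1 from by ring]
      simp [Matrix.trace_fin_two, Matrix.mul_apply, Fin.sum_univ_two,
        Complex.add_re, Complex.sub_re, Complex.mul_re, Complex.add_im, Complex.sub_im,
        Complex.mul_im]
      push_cast
      ring_nf
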